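/- If the equation x/κ_d = (1 + xⁿ)/(K + xⁿ) with K > 1 and n > 1 has three distinct positive solutions, then κ_d ≥ ((n+1)/(n−1)) · ((n+1)/(n−1))^{1/n}. -/

import Mathlib

set_option maxHeartbeats 1000000
open Set

lemma gderiv (K : ℝ) {n : ℕ} (hn : 1 < n) {x : ℝ} (hx : 0 < x) :
    HasDerivAt (fun y : ℝ => y * (K + y ^ n) / (1 + y ^ n))
      (((x^n)^2 - (K*((n:ℝ)-1) - ((n:ℝ)+1)) * x^n + K) / (1 + x^n)^2) x := by
  have hden : (0:ℝ) < 1 + x ^ n := by positivity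
  have hx1 : x * x^(n-1) = x^n := by
    rw [← pow_succ']; congr 1; omega
  have hpow : HasDerivAt (fun y : ℝ => y ^ n) ((n:ℝ) * x ^ (n-1)) x := hasDerivAt_pow n x
  have hnum : HasDerivAt (fun y : ℝ => y * (K + y ^ n)) (K + ((n:ℝ)+1) * x^n) x := by
    have h := (hasDerivAt_id x).mul ((hasDerivAt_const x K).add hpow)
    refine h.congr_deriv ?_
    show 1 * (K + x^n) + x * (0 + (n:ℝ) * x^(n-1)) = _
    linear_combination ((n:ℝ)) * hx1
  have hden' : HasDerivAt (fun y : ℝ => 1 + y ^ n) ((n:ℝ) * x ^ (n-1)) x :=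
    by simpa using hpow
  have h := hnum.div hden' (ne_of_gt hden)
  refine h.congr_deriv ?_
  congr 1
  linear_combination (-((n:ℝ)*(K + x^n))) * hx1

lemma amgm {N s : ℝ} (hN : 1 ≤ N) (hs : 0 < s) :
    (N + 1) * s ≤ N * (s * s ^ ((1:ℝ)/N)) + 1 := by
  have hN0 : (0:ℝ) < N := lt_of_lt_of_le one_pos hN
  have hN1 : (0:ℝ) < N + 1 := by linarith
  have hp : s * s ^ ((1:ℝ)/N) = s ^ ((N+1)/N) := by
    have e1 : (N+1)/N = 1 + 1/N := by field_simp
    rw [e1, Real.rpow_add hs, Real.rpow_one]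
  have hw : N/(N+1) + 1/(N+1) = 1 := by field_simp
  have hgm := Real.geom_mean_le_arith_mean2_weighted
    (by positivity : (0:ℝ) ≤ N/(N+1)) (by positivity : (0:ℝ) ≤ 1/(N+1))
    (by positivity : (0:ℝ) ≤ s ^ ((N+1)/N)) zero_le_one hw
  have hpw : (s ^ ((N+1)/N)) ^ (N/(N+1)) = s := by
    rw [← Real.rpow_mul hs.le]
    rw [show (N+1)/N * (N/(N+1)) = 1 by field_simp, Real.rpow_one]
  rw [hpw, Real.one_rpow, mul_one, mul_one] at hgm
  have h2 := mul_le_mul_of_nonneg_left hgm hN1.le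
  have h3 : (N+1) * (N/(N+1) * s ^ ((N+1)/N) + 1/(N+1)) = N * s ^ ((N+1)/N) + 1 := by
    field_simp
  rw [h3] at h2
  rw [hp]
  linarith

lemma key (K κd : ℝ) (n : ℕ) (hK : 1 < K) (hn : 1 < n) (hκ : 0 < κd)
    (x₁ x₂ x₃ : ℝ) (h₁ : 0 < x₁) (o12 : x₁ < x₂) (o23 : x₂ < x₃)
    (e₁ : x₁ / κd = (1 + x₁ ^ n) / (K + x₁ ^ n))
    (e₂ : x₂ / κd = (1 + x₂ ^ n) / (K + x₂ ^ n))
    (e₃ : x₃ / κd = (1 + x₃ ^ n) / (K + x₃ ^ n)) :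
    (((n : ℝ) + 1) / ((n : ℝ) - 1)) *
      ((((n : ℝ) + 1) / ((n : ℝ) - 1)) ^ ((1 : ℝ) / n)) ≤ κd := by
  have h₂ : 0 < x₂ := h₁.trans o12
  have h₃ : 0 < x₃ := h₂.trans o23
  have hN2 : (2:ℝ) ≤ (n:ℝ) := by exact_mod_cast hn
  set g : ℝ → ℝ := fun y => y * (K + y ^ n) / (1 + y ^ n) with hg
  set f' : ℝ → ℝ := fun y =>
    ((y^n)^2 - (K*((n:ℝ)-1) - ((n:ℝ)+1)) * y^n + K) / (1 + y^n)^2 with hf'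
  -- g(x_i) = κd
  have geq : ∀ x : ℝ, 0 < x → x / κd = (1 + x ^ n) / (K + x ^ n) → g x = κd := by
    intro x hx e
    have hKx : (0:ℝ) < K + x ^ n := by positivity
    rw [div_eq_div_iff hκ.ne' hKx.ne'] at e
    have hden : (0:ℝ) < 1 + x ^ n := by positivity
    show x * (K + x ^ n) / (1 + x ^ n) = κd
    rw [div_eq_iff hden.ne']
    linear_combination e
  have g₁ := geq x₁ h₁ e₁
  have g₂ := geq x₂ h₂ e₂
  have g₃ := geq x₃ h₃ e₃
  have cont : ∀ u v : ℝ, 0 < u → ContinuousOn g (Icc u v) := by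
    intro u v hu x hx
    exact ((gderiv K hn (hu.trans_le hx.1)).continuousAt).continuousWithinAt
  have derivOn : ∀ u v : ℝ, 0 < u → ∀ x ∈ Ioo u v, HasDerivAt g (f' x) x := by
    intro u v hu x hx
    exact gderiv K hn (hu.trans hx.1)
  obtain ⟨a, ha, hda⟩ := exists_hasDerivAt_eq_zero o12 (cont _ _ h₁) (g₁.trans g₂.symm)
    (derivOn _ _ h₁)
  obtain ⟨b, hb, hdb⟩ := exists_hasDerivAt_eq_zero o23 (cont _ _ h₂) (g₂.trans g₃.symm)
    (derivOn _ _ h₂)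
  have hapos : 0 < a := h₁.trans ha.1
  have hbpos : 0 < b := h₂.trans hb.1
  have hab : a < b := ha.2.trans hb.1
  set B : ℝ := K*((n:ℝ)-1) - ((n:ℝ)+1) with hB
  set t₁ : ℝ := a ^ n with ht₁def
  set t₂ : ℝ := b ^ n with ht₂def
  have ht₁ : 0 < t₁ := by positivity
  have ht₂ : 0 < t₂ := by positivity
  have htlt : t₁ < t₂ := pow_lt_pow_left₀ hab hapos.le (by omega)
  have eqa : t₁^2 - B * t₁ + K = 0 :=
    (div_eq_zero_iff.mp hda).resolve_right (by positivity)
  have eqb : t₂^2 - B * t₂ + K = 0 :=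
    (div_eq_zero_iff.mp hdb).resolve_right (by positivity)
  clear_value t₁ t₂ B
  have hsum : t₁ + t₂ = B := by
    have hz : (t₁ - t₂) * (t₁ + t₂ - B) = 0 := by linear_combination eqa - eqb
    rcases mul_eq_zero.mp hz with h | h
    · exact absurd h (sub_ne_zero.mpr htlt.ne)
    · linarith
  have hprod : t₁ * t₂ = K := by linear_combination (-1 : ℝ)*eqa + t₁*hsum
  have star : t₁ + t₂ + (n:ℝ) + 1 = t₁*t₂*((n:ℝ)-1) := by
    linear_combination hsum - ((n:ℝ)-1)*hprod + hB
  have hfac : t₁ * (((n:ℝ)-1)*t₂ - 1) = t₂ + (n:ℝ) + 1 := by linear_combination -star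
  have hD : 0 < ((n:ℝ)-1)*t₂ - 1 := by
    by_contra h
    push_neg at h
    nlinarith [mul_nonpos_of_nonneg_of_nonpos ht₁.le h]
  have hq : 0 < (t₂+1)*(((n:ℝ)-1)*t₂ - ((n:ℝ)+1)) := by
    nlinarith [mul_lt_mul_of_pos_right htlt hD, hfac]
  have ht0 : (n:ℝ)+1 < ((n:ℝ)-1)*t₂ := by
    by_contra h
    push_neg at h
    have h' : ((n:ℝ)-1)*t₂ - ((n:ℝ)+1) ≤ 0 := by linarith
    have h'' := mul_nonpos_of_nonneg_of_nonpos (by linarith : (0:ℝ) ≤ t₂ + 1) h'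
    linarith
  -- MVT on [x₂, b]
  obtain ⟨c, hc, hdc⟩ := exists_hasDerivAt_eq_slope g f' hb.1 (cont _ _ h₂) (derivOn _ _ h₂)
  have hcpos : 0 < c := h₂.trans hc.1
  have hc1 : t₁ < c^n := by
    rw [ht₁def]; exact pow_lt_pow_left₀ (ha.2.trans hc.1) hapos.le (by omega)
  have hc2 : c^n < t₂ := by
    rw [ht₂def]; exact pow_lt_pow_left₀ hc.2 hcpos.le (by omega)
  have hcnum : (c^n)^2 - (K*((n:ℝ)-1) - ((n:ℝ)+1))*(c^n) + K = (c^n - t₁)*(c^n - t₂) := by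
    linear_combination (c^n)*hsum - hprod + (c^n)*hB
  have hneg : f' c < 0 := by
    have hnum2 : (c^n)^2 - (K*((n:ℝ)-1) - ((n:ℝ)+1))*(c^n) + K < 0 := by
      rw [hcnum]
      exact mul_neg_of_pos_of_neg (sub_pos.mpr hc1) (sub_neg.mpr hc2)
    exact div_neg_of_neg_of_pos hnum2 (by positivity)
  have hgb : g b < κd := by
    have hbx : 0 < b - x₂ := sub_pos.mpr hb.1
    have h5 : g b - g x₂ = f' c * (b - x₂) := by
      rw [hdc]; field_simp
    linarith [mul_neg_of_neg_of_pos hneg hbx, h5, g₂]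
  have hgb' : b*(K+t₂)/(1+t₂) < κd := by rw [ht₂def]; exact hgb
  have hgbform : b*(K+t₂)/(1+t₂) = (n:ℝ)*b*t₂/(((n:ℝ)-1)*t₂-1) := by
    rw [div_eq_div_iff (by positivity) hD.ne']
    linear_combination (-(b*t₂))*star - (b*(((n:ℝ)-1)*t₂-1))*hprod
  rw [hgbform] at hgb'
  -- final rpow algebra
  set t0 : ℝ := ((n:ℝ)+1)/((n:ℝ)-1) with ht0def
  have hn1pos : (0:ℝ) < (n:ℝ) - 1 := by linarith
  have ht0pos : 0 < t0 := div_pos (by linarith) hn1pos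
  set A : ℝ := t₂ ^ ((1:ℝ)/(n:ℝ)) with hA
  set Bb : ℝ := t0 ^ ((1:ℝ)/(n:ℝ)) with hBb
  have hApos : 0 < A := Real.rpow_pos_of_pos ht₂ _
  have hBpos : 0 < Bb := Real.rpow_pos_of_pos ht0pos _
  have hbA : b = A := by
    rw [hA, ht₂def, ← Real.rpow_natCast b n, ← Real.rpow_mul hbpos.le, mul_one_div,
      div_self (by positivity : ((n:ℝ)) ≠ 0), Real.rpow_one]
  have hsdiv : (t₂/t0) ^ ((1:ℝ)/(n:ℝ)) = A / Bb := Real.div_rpow ht₂.le ht0pos.le _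
  have ham := amgm (N := (n:ℝ)) (by linarith) (div_pos ht₂ ht0pos)
  rw [hsdiv] at ham
  have hKEY : ((n:ℝ)+1)*t₂*Bb ≤ (n:ℝ)*t₂*A + t0*Bb := by
    have h7 := mul_le_mul_of_nonneg_left ham (mul_pos ht0pos hBpos).le
    have e8 : t0*Bb*(((n:ℝ)+1)*(t₂/t0)) = ((n:ℝ)+1)*t₂*Bb := by
      field_simp
    have e9 : t0*Bb*((n:ℝ)*((t₂/t0)*(A/Bb)) + 1) = (n:ℝ)*t₂*A + t0*Bb := by
      field_simp
    rw [e8, e9] at h7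
    exact h7
  have e10 : ((n:ℝ)-1)*t0 = (n:ℝ)+1 := by
    rw [ht0def]; field_simp
  have e11 : t0*Bb*(((n:ℝ)-1)*t₂-1) = ((n:ℝ)+1)*t₂*Bb - t0*Bb := by
    linear_combination (t₂*Bb)*e10
  have hDt : t0*Bb*(((n:ℝ)-1)*t₂-1) ≤ (n:ℝ)*b*t₂ := by
    rw [hbA, e11]; linarith [hKEY]
  have hfin : t0*Bb ≤ (n:ℝ)*b*t₂/(((n:ℝ)-1)*t₂-1) := by
    rw [le_div_iff₀ hD]; linarith [hDt]
  linarith [hfin, hgb']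

/-- Necessary condition for three distinct positive steady states:
κ_d ≥ ((n+1)/(n−1))·((n+1)/(n−1))^{1/n}. -/
theorem bistability_necessary_kappa
    (K κd : ℝ) (n : ℕ) (hK : 1 < K) (hn : 1 < n) (hκ : 0 < κd)
    (x₁ x₂ x₃ : ℝ) (h₁ : 0 < x₁) (h₂ : 0 < x₂) (h₃ : 0 < x₃)
    (h12 : x₁ ≠ x₂) (h13 : x₁ ≠ x₃) (h23 : x₂ ≠ x₃)
    (e₁ : x₁ / κd = (1 + x₁ ^ n) / (K + x₁ ^ n))
    (e₂ : x₂ / κd = (1 + x₂ ^ n) / (K + x₂ ^ n))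
    (e₃ : x₃ / κd = (1 + x₃ ^ n) / (K + x₃ ^ n)) :
    (((n : ℝ) + 1) / ((n : ℝ) - 1)) *
      ((((n : ℝ) + 1) / ((n : ℝ) - 1)) ^ ((1 : ℝ) / n)) ≤ κd := by
  rcases h12.lt_or_gt with h|h <;> rcases h13.lt_or_gt with h'|h' <;>
    rcases h23.lt_or_gt with h''|h'' <;>
  first
    | exact key K κd n hK hn hκ x₁ x₂ x₃ h₁ (by linarith) (by linarith) e₁ e₂ e₃
    | exact key K κd n hK hn hκ x₁ x₃ x₂ h₁ (by linarith) (by linarith) e₁ e₃ e₂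
    | exact key K κd n hK hn hκ x₂ x₁ x₃ h₂ (by linarith) (by linarith) e₂ e₁ e₃
    | exact key K κd n hK hn hκ x₂ x₃ x₁ h₂ (by linarith) (by linarith) e₂ e₃ e₁
    | exact key K κd n hK hn hκ x₃ x₁ x₂ h₃ (by linarith) (by linarith) e₃ e₁ e₂
    | exact key K κd n hK hn hκ x₃ x₂ x₁ h₃ (by linarith) (by linarith) e₃ e₂ e₁
    | linarith
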